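/- Let α > γ > 0, σ ≥ μ > 0 and fix β > σ/γ. Then the function λ ↦ δ₂(β, λ) is strictly decreasing on (0, +∞), where δ₂(β, λ) = (1/(2λ))·(−μλ + βα b_β − σλ + βγ a_β + √((μλ − βα b_β + σλ − βγ a_β)² − 4(μσλ² − βα b_β σλ − βγ a_β μλ))). -/
import Mathlib


/-- The positive constant solution component `a_β`. -/
noncomputable def aβ (μ σ α γ β : ℝ) : ℝ := (β * α - μ) * σ / (β ^ 2 * α * γ - μ * σ)

/-- The positive constant solution component `b_β`. -/
noncomputable def bβ (μ σ α γ β : ℝ) : ℝ := (β * γ - σ) * μ / (β ^ 2 * α * γ - μ * σ)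

/-- The smaller eigenvalue `δ₁(β, λ)` of the matrix `D(β, λ)` (times λ). -/
noncomputable def delta₁ (μ σ α γ β lam : ℝ) : ℝ :=
  (1 / (2 * lam)) * (-(μ * lam) + β * α * bβ μ σ α γ β - σ * lam + β * γ * aβ μ σ α γ β -
    Real.sqrt ((μ * lam - β * α * bβ μ σ α γ β + σ * lam - β * γ * aβ μ σ α γ β) ^ 2 -
      4 * (μ * σ * lam ^ 2 - β * α * bβ μ σ α γ β * σ * lam -
        β * γ * aβ μ σ α γ β * μ * lam)))

/-- The larger eigenvalue `δ₂(β, λ)` of the matrix `D(β, λ)` (times λ). -/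
noncomputable def delta₂ (μ σ α γ β lam : ℝ) : ℝ :=
  (1 / (2 * lam)) * (-(μ * lam) + β * α * bβ μ σ α γ β - σ * lam + β * γ * aβ μ σ α γ β +
    Real.sqrt ((μ * lam - β * α * bβ μ σ α γ β + σ * lam - β * γ * aβ μ σ α γ β) ^ 2 -
      4 * (μ * σ * lam ^ 2 - β * α * bβ μ σ α γ β * σ * lam -
        β * γ * aβ μ σ α γ β * μ * lam)))


private lemma delta2_aux (μ σ A B lam d : ℝ) (hA : 0 < A) (hB : 0 < B)
    (hlam : 0 < lam)
    (hd : d = (1 / (2 * lam)) * (-(μ * lam) + A - σ * lam + B +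
      Real.sqrt ((μ * lam - A + σ * lam - B) ^ 2 -
        4 * (μ * σ * lam ^ 2 - A * σ * lam - B * μ * lam)))) :
    0 < d + μ ∧ 0 < d + σ ∧ lam = A / (d + μ) + B / (d + σ) := by
  set s := Real.sqrt ((μ * lam - A + σ * lam - B) ^ 2 -
      4 * (μ * σ * lam ^ 2 - A * σ * lam - B * μ * lam)) with hs
  have hE : 0 ≤ (μ * lam - A + σ * lam - B) ^ 2 -
      4 * (μ * σ * lam ^ 2 - A * σ * lam - B * μ * lam) := by
    nlinarith [sq_nonneg ((σ - μ) * lam + A - B), mul_pos hA hB]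
  have hs2 : s ^ 2 = (μ * lam - A + σ * lam - B) ^ 2 -
      4 * (μ * σ * lam ^ 2 - A * σ * lam - B * μ * lam) := Real.sq_sqrt hE
  have hsu : |(σ - μ) * lam + A - B| < s := by
    rw [hs, ← Real.sqrt_sq_eq_abs]
    exact Real.sqrt_lt_sqrt (sq_nonneg _) (by nlinarith [mul_pos hA hB])
  obtain ⟨hu2, hu1⟩ := abs_lt.mp hsu
  have h2d : 2 * lam * d = -(μ * lam) + A - σ * lam + B + s := by
    rw [hd]; field_simp
  have hdμ : 0 < d + μ := by
    have h3 : 0 < 2 * lam * (d + μ) := by nlinarith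
    by_contra h
    push_neg at h
    nlinarith
  have hdσ : 0 < d + σ := by
    have h3 : 0 < 2 * lam * (d + σ) := by nlinarith
    by_contra h
    push_neg at h
    nlinarith
  refine ⟨hdμ, hdσ, ?_⟩
  have h4 : 4 * lam * (lam * ((d + μ) * (d + σ)) - (A * (d + σ) + B * (d + μ))) = 0 := by
    linear_combination (2 * lam * d + s + μ * lam - A + σ * lam - B) * h2d + hs2
  have hT : lam * ((d + μ) * (d + σ)) - (A * (d + σ) + B * (d + μ)) = 0 := by
    rcases mul_eq_zero.mp h4 with h | h
    · exfalso; nlinarith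
    · exact h
  field_simp
  linarith [hT]

/-- For α > γ > 0, σ ≥ μ > 0 and fixed β > σ/γ, the map λ ↦ δ₂(β, λ)
is strictly decreasing on (0, ∞). -/
theorem delta2_strictAntiOn_lam
    (μ σ α γ β : ℝ) (hαγ : γ < α) (hγ : 0 < γ) (hμσ : μ ≤ σ) (hμ : 0 < μ)
    (hβ : σ / γ < β) :
    StrictAntiOn (fun lam : ℝ => delta₂ μ σ α γ β lam) (Set.Ioi 0) := by
  have hσ : 0 < σ := lt_of_lt_of_le hμ hμσ
  have hβ0 : 0 < β := lt_trans (div_pos hσ hγ) hβ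
  have hβγ : σ < β * γ := (div_lt_iff₀ hγ).mp hβ
  have hβα : μ < β * α := by nlinarith
  have hD : 0 < β ^ 2 * α * γ - μ * σ := by nlinarith
  have hA : 0 < β * α * bβ μ σ α γ β := by
    rw [bβ]
    exact mul_pos (mul_pos hβ0 (hγ.trans hαγ)) (div_pos (by nlinarith) hD)
  have hB : 0 < β * γ * aβ μ σ α γ β := by
    rw [aβ]
    exact mul_pos (mul_pos hβ0 hγ) (div_pos (by nlinarith) hD)
  intro x hx y hy hxy
  simp only [Set.mem_Ioi] at hx hy
  obtain ⟨hx1, hx2, hx3⟩ := delta2_aux μ σ (β * α * bβ μ σ α γ β) (β * γ * aβ μ σ α γ β)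
    x (delta₂ μ σ α γ β x) hA hB hx rfl
  obtain ⟨hy1, hy2, hy3⟩ := delta2_aux μ σ (β * α * bβ μ σ α γ β) (β * γ * aβ μ σ α γ β)
    y (delta₂ μ σ α γ β y) hA hB hy rfl
  by_contra h
  push_neg at h
  have h1 : β * α * bβ μ σ α γ β / (delta₂ μ σ α γ β y + μ)
      ≤ β * α * bβ μ σ α γ β / (delta₂ μ σ α γ β x + μ) := by
    gcongr
  have h2 : β * γ * aβ μ σ α γ β / (delta₂ μ σ α γ β y + σ)
      ≤ β * γ * aβ μ σ α γ β / (delta₂ μ σ α γ β x + σ) := by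
    gcongr
  linarith [hx3, hy3, h1, h2, hxy]
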